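/- (Symmetry set bound via coset intersections) Let G act on X, A ⊆ G finite, Y ⊆ X finite nonempty, 0 < α ≤ 1. Then α|Y| · |A ∩ Sym_α(Y)| ≤ |Y|² · max_{g∈G, x∈Y} |A ∩ g·Stab(x)|. In particular |A ∩ Sym_α(Y)| ≤ α⁻¹|Y| · max_{g,x} |A ∩ g·Stab(x)|. -/

import Mathlib

open scoped Classical

theorem stmt8 {G X : Type*} [Group G] [MulAction G X]
    (A : Finset G) (Y : Finset X) (hY : Y.Nonempty)
    (α : ℝ) (hα0 : 0 < α) (hα1 : α ≤ 1) (M : ℕ)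
    (hM : ∀ g : G, ∀ x ∈ Y, (A.filter (fun a => a • x = g • x)).card ≤ M) :
    α * Y.card *
        ((A.filter (fun g => α * Y.card ≤
          ((Y ∩ Y.image (fun y => g • y)).card : ℝ))).card : ℝ) ≤
      (Y.card : ℝ) ^ 2 * M ∧
    ((A.filter (fun g => α * Y.card ≤
        ((Y ∩ Y.image (fun y => g • y)).card : ℝ))).card : ℝ) ≤
      α⁻¹ * Y.card * M := by
  set S := A.filter (fun g => α * Y.card ≤
      ((Y ∩ Y.image (fun y => g • y)).card : ℝ)) with hS
  have hYc : (0:ℝ) < Y.card := by exact_mod_cast Finset.card_pos.mpr hY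
  -- the key double-counting bound over all of A
  have key : ∑ g ∈ A, (Y ∩ Y.image (fun y => g • y)).card ≤ Y.card ^ 2 * M := by
    have h1 : ∀ g : G, (Y ∩ Y.image (fun y => g • y)).card
        = (Y.filter (fun y => g • y ∈ Y)).card := by
      intro g
      rw [← Finset.card_image_of_injective (Y.filter (fun y => g • y ∈ Y)) (MulAction.injective g)]
      congr 1
      ext x
      simp only [Finset.mem_image, Finset.mem_inter, Finset.mem_filter]
      constructor
      · rintro ⟨hx, y, hy, rfl⟩; exact ⟨y, ⟨hy, hx⟩, rfl⟩
      · rintro ⟨y, ⟨hy, hgy⟩, rfl⟩; exact ⟨hgy, y, hy, rfl⟩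
    calc ∑ g ∈ A, (Y ∩ Y.image (fun y => g • y)).card
        = ∑ g ∈ A, (Y.filter (fun y => g • y ∈ Y)).card := by
          exact Finset.sum_congr rfl (fun g _ => h1 g)
      _ = ∑ y ∈ Y, (A.filter (fun g => g • y ∈ Y)).card := by
          simp only [Finset.card_filter]
          rw [Finset.sum_comm]
      _ ≤ ∑ _y ∈ Y, Y.card * M := by
          apply Finset.sum_le_sum
          intro y hy
          have hbu : A.filter (fun g => g • y ∈ Y)
              = Y.biUnion (fun x => A.filter (fun g => g • y = x)) := by
            ext g
            simp only [Finset.mem_filter, Finset.mem_biUnion]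
            constructor
            · rintro ⟨hg, hgy⟩; exact ⟨g • y, hgy, hg, rfl⟩
            · rintro ⟨x, hx, hg, rfl⟩; exact ⟨hg, hx⟩
          rw [hbu]
          calc (Y.biUnion (fun x => A.filter (fun g => g • y = x))).card
              ≤ ∑ x ∈ Y, (A.filter (fun g => g • y = x)).card :=
                Finset.card_biUnion_le
            _ ≤ ∑ _x ∈ Y, M := by
                apply Finset.sum_le_sum
                intro x hx
                rcases Finset.eq_empty_or_nonempty
                    (A.filter (fun g => g • y = x)) with h | ⟨g₀, hg₀⟩
                · simp [h]
                · simp only [Finset.mem_filter] at hg₀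
                  calc (A.filter (fun g => g • y = x)).card
                      = (A.filter (fun a => a • y = g₀ • y)).card := by rw [hg₀.2]
                    _ ≤ M := hM g₀ y hy
            _ = Y.card * M := by simp [Finset.sum_const, mul_comm]
      _ = Y.card ^ 2 * M := by simp [Finset.sum_const, sq, mul_assoc]
  have hsum : (α * Y.card) * S.card
      ≤ ∑ g ∈ S, ((Y ∩ Y.image (fun y => g • y)).card : ℝ) := by
    have h := Finset.card_nsmul_le_sum S
      (fun g => ((Y ∩ Y.image (fun y => g • y)).card : ℝ)) (α * Y.card)
      (fun g hg => (Finset.mem_filter.mp hg).2)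
    simpa [nsmul_eq_mul, mul_comm] using h
  have hsub : ∑ g ∈ S, ((Y ∩ Y.image (fun y => g • y)).card : ℝ)
      ≤ ∑ g ∈ A, ((Y ∩ Y.image (fun y => g • y)).card : ℝ) :=
    Finset.sum_le_sum_of_subset_of_nonneg (Finset.filter_subset _ _)
      (fun _ _ _ => by positivity)
  have hA : ∑ g ∈ A, ((Y ∩ Y.image (fun y => g • y)).card : ℝ)
      ≤ (Y.card : ℝ) ^ 2 * M := by
    have := key
    push_cast
    exact_mod_cast Nat.cast_le.mpr key
  have first : α * Y.card * S.card ≤ (Y.card : ℝ) ^ 2 * M := by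
    calc α * Y.card * S.card ≤ _ := hsum
      _ ≤ _ := hsub
      _ ≤ _ := hA
  refine ⟨first, ?_⟩
  rw [← mul_le_mul_iff_of_pos_left (show (0:ℝ) < α * Y.card by positivity)]
  calc α * Y.card * S.card ≤ (Y.card : ℝ) ^ 2 * M := first
    _ = α * Y.card * (α⁻¹ * Y.card * M) := by
        rw [show α * Y.card * (α⁻¹ * Y.card * M)
            = (α * α⁻¹) * ((Y.card:ℝ)^2 * M) by ring,
          mul_inv_cancel₀ hα0.ne', one_mul]
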